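/- Let $R$ be an integral domain with fraction field $Q$, and let $X_\infty(R) = \{(\phi_p)_{p \in R^\times} \in \prod_{p \in R^\times} \widehat{R_+} : \phi_q(\tfrac{q}{p} \cdot x) = \phi_p(x) \text{ for all } x, \text{ whenever } p \mid q\}$, with $Q^\times$ acting by $(\tfrac{p_0}{q_0} \cdot \phi)_p = \phi_{p p_0}(q_0 \cdot)$. If $\phi = (\phi_p) \in X_\infty(R)$ is not identically the trivial character, then the isotropy group $Q^\times_\phi = \{g \in Q^\times : g \cdot \phi = \phi\}$ is trivial. -/

import Mathlib

/-- If `φ ∈ X_∞(R)` is not the trivial family of characters, then its isotropy group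
under the `Q^×`-action is trivial: any `p₀/q₀ ∈ Q^×` fixing `φ` equals `1`. -/
theorem stmt2 (R : Type*) [CommRing R] [IsDomain R]
    (φ : {p : R // p ≠ 0} → R → ℂ)
    (habs : ∀ p x, ‖φ p x‖ = 1)
    (hchar : ∀ p x y, φ p (x + y) = φ p x * φ p y)
    (hcompat : ∀ (p q : {p : R // p ≠ 0}) (c : R), c * (p : R) = (q : R) →
      ∀ x, φ q (c * x) = φ p x)
    (hnontriv : ∃ p x, φ p x ≠ 1)
    (p₀ q₀ : R) (hp₀ : p₀ ≠ 0) (hq₀ : q₀ ≠ 0)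
    (hfix : ∀ p : {p : R // p ≠ 0}, ∀ x : R,
      φ ⟨(p : R) * p₀, mul_ne_zero p.2 hp₀⟩ (q₀ * x) = φ p x) :
    p₀ = q₀ := by
  by_contra hne
  set d : R := q₀ - p₀ with hd
  have hdne : d ≠ 0 := sub_ne_zero.mpr (Ne.symm hne)
  have hne0 : ∀ p x, φ p x ≠ 0 := by
    intro p x h
    have := habs p x
    rw [h] at this
    simp at this
  -- key : φ at index p*p₀ kills all multiples of d
  have key : ∀ (p : {p : R // p ≠ 0}) (x : R),
      φ ⟨(p : R) * p₀, mul_ne_zero p.2 hp₀⟩ (d * x) = 1 := by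
    intro p x
    have h1 := hfix p x
    have h2 := hcompat p ⟨(p : R) * p₀, mul_ne_zero p.2 hp₀⟩ p₀ (by ring) x
    have hsplit : q₀ * x = p₀ * x + d * x := by ring
    rw [hsplit, hchar, h2] at h1
    have := hne0 p x
    field_simp at h1
    exact h1
  -- hence φ is trivial
  have triv : ∀ p x, φ p x = 1 := by
    intro q x
    have pne : (q : R) * d ≠ 0 := mul_ne_zero q.2 hdne
    have h3 := hcompat q ⟨((q : R) * d) * p₀, mul_ne_zero pne hp₀⟩ (d * p₀) (by ring) x
    have h4 := key ⟨(q : R) * d, pne⟩ (p₀ * x)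
    rw [show d * p₀ * x = d * (p₀ * x) by ring] at h3
    rw [h4] at h3
    exact h3.symm
  obtain ⟨p, x, h⟩ := hnontriv
  exact h (triv p x)
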